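/- For n a power of 2 and l = log₂ n, the recursively defined tensor A^(l) (starting from A^(0) = I_{n^{k-1}} and doubling via the block construction) is an n^k × n^k × n tensor with R[A^(l)] ≥ 2n^k − n^{k-1}. -/

import Mathlib

open scoped BigOperators

noncomputable def tRank (F : Type) [Field F] {I J K : Type} [Fintype I] [Fintype J] [Fintype K]
    (A : I → J → K → F) : ℕ :=
  sInf {m | ∃ x : Fin m → I → F, ∃ y : Fin m → J → F, ∃ z : Fin m → K → F,
    ∀ i j k, A i j k = ∑ t, x t i * y t j * z t k}

/-- Row/column index type of the recursive tensor `A^(i)`. -/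
def ArecIdx (m : ℕ) : ℕ → Type
  | 0 => Fin m
  | (i+1) => Fin 2 × ArecIdx m i

/-- Slice index type of the recursive tensor `A^(i)`. -/
def ArecSl : ℕ → Type
  | 0 => Fin 1
  | (i+1) => Fin 2 × ArecSl i

instance instArecIdxFintype (m : ℕ) : (i : ℕ) → Fintype (ArecIdx m i)
  | 0 => inferInstanceAs (Fintype (Fin m))
  | (i+1) => @instFintypeProd _ _ _ (instArecIdxFintype m i)

instance instArecSlFintype : (i : ℕ) → Fintype (ArecSl i)
  | 0 => inferInstanceAs (Fintype (Fin 1))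
  | (i+1) => @instFintypeProd _ _ _ (instArecSlFintype i)

instance instArecIdxDecEq (m : ℕ) : (i : ℕ) → DecidableEq (ArecIdx m i)
  | 0 => inferInstanceAs (DecidableEq (Fin m))
  | (i+1) => @instDecidableEqProd _ _ _ (instArecIdxDecEq m i)

/-- The recursive tensor: `A^(0) = I_m` (one slice), and
`A^(i+1) = [[A^(i)(s), A^(i)(t)], [A^(i)(t), 0]]`, where the first component of the
slice index chooses between the `s`-variables (`0`) and the `t`-variables (`1`). -/
def Arec (F : Type) [Field F] (m : ℕ) : (i : ℕ) → ArecIdx m i → ArecIdx m i → ArecSl i → F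
  | 0 => fun r c _ => if r = c then (1 : F) else 0
  | (i+1) => fun rc cc el =>
      if el.1 = 0 then
        (if rc.1 = 0 ∧ cc.1 = 0 then Arec F m i rc.2 cc.2 el.2 else 0)
      else
        (if (rc.1 = 0 ∧ cc.1 = 1) ∨ (rc.1 = 1 ∧ cc.1 = 0) then Arec F m i rc.2 cc.2 el.2 else 0)

section Aux

variable (F : Type) [Field F]

def hasDec {I J K : Type} [Fintype I] [Fintype J] [Fintype K]
    (A : I → J → K → F) (r : ℕ) : Prop :=
  ∃ x : Fin r → I → F, ∃ y : Fin r → J → F, ∃ z : Fin r → K → F,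
    ∀ i j k, A i j k = ∑ t, x t i * y t j * z t k

variable {I J K : Type} [Fintype I] [Fintype J] [Fintype K]

lemma tRank_eq_sInf (A : I → J → K → F) : tRank F A = sInf {r | hasDec F A r} := rfl

lemma hasDec_congr {A B : I → J → K → F} (h : ∀ i j k, A i j k = B i j k) {r : ℕ}
    (hA : hasDec F A r) : hasDec F B r := by
  obtain ⟨x, y, z, hx⟩ := hA
  exact ⟨x, y, z, fun i j k => by rw [← h]; exact hx i j k⟩

lemma hasDec_comp {I' J' K' : Type} [Fintype I'] [Fintype J'] [Fintype K']
    (f : I' → I) (g : J' → J) (hm : K' → K) {A : I → J → K → F} {r : ℕ}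
    (hA : hasDec F A r) : hasDec F (fun i j k => A (f i) (g j) (hm k)) r := by
  obtain ⟨x, y, z, hx⟩ := hA
  exact ⟨fun t i => x t (f i), fun t j => y t (g j), fun t k => z t (hm k),
    fun i j k => hx _ _ _⟩

lemma hasDec_swap {A : I → J → K → F} {r : ℕ} (hA : hasDec F A r) :
    hasDec F (fun j i k => A i j k) r := by
  obtain ⟨x, y, z, hx⟩ := hA
  refine ⟨y, x, z, fun j i k => ?_⟩
  show A i j k = _
  rw [hx i j k]
  exact Finset.sum_congr rfl fun t _ => by ring

lemma hasDec_total (A : I → J → K → F) : hasDec F A (Fintype.card (I × K)) := by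
  classical
  set σ := (Fintype.equivFin (I × K)).symm with hσ
  refine ⟨fun t i => if (σ t).1 = i then 1 else 0,
          fun t j => A (σ t).1 j (σ t).2,
          fun t k => if (σ t).2 = k then 1 else 0, fun i j k => ?_⟩
  rw [← Equiv.sum_comp σ.symm
    (fun t => (if (σ t).1 = i then (1:F) else 0) * A (σ t).1 j (σ t).2 *
      (if (σ t).2 = k then 1 else 0))]
  simp only [Equiv.symm_apply_apply, hσ, Equiv.symm_symm]
  rw [Fintype.sum_prod_type]
  simp [ite_mul, mul_ite]

lemma hasDec_drop (A : I → J → K → F) (r : ℕ)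
    (x : Fin (r+1) → I → F) (y : Fin (r+1) → J → F) (z : Fin (r+1) → K → F)
    (hA : ∀ i j k, A i j k = ∑ t, x t i * y t j * z t k)
    (t₀ : Fin (r+1)) (hx : ∀ i, x t₀ i = 0) :
    hasDec F A r := by
  classical
  set e := Equiv.swap t₀ (Fin.last r) with he
  refine ⟨fun t i => x (e t.castSucc) i, fun t j => y (e t.castSucc) j,
          fun t k => z (e t.castSucc) k, fun i j k => ?_⟩
  rw [hA i j k, ← Equiv.sum_comp e (fun t => x t i * y t j * z t k)]
  rw [Fin.sum_univ_castSucc]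
  have hlast : e (Fin.last r) = t₀ := Equiv.swap_apply_right _ _
  simp [hlast, hx]

end Aux

section Step

variable (F : Type) [Field F]

lemma step_row {I J K' : Type} [Fintype I] [Fintype J] [Fintype K'] (p r : ℕ)
    (T : (I ⊕ Fin (p+1)) → J → K' → F)
    (hdec : hasDec F T r)
    (hind : ∀ c : Fin (p+1) → F,
      (∀ j k, ∑ a, c a * T (Sum.inr a) j k = 0) → ∀ a, c a = 0) :
    1 ≤ r ∧ ∃ μ : (I ⊕ Fin p) → F,
      hasDec F (fun u j k =>
        T (Sum.map id Fin.castSucc u) j k + μ u * T (Sum.inr (Fin.last p)) j k)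
        (r - 1) := by
  classical
  obtain ⟨x, y, z, h⟩ := hdec
  have hex : ∃ t₀ : Fin r, x t₀ (Sum.inr (Fin.last p)) ≠ 0 := by
    by_contra hc
    push_neg at hc
    have hzero : ∀ j k, T (Sum.inr (Fin.last p)) j k = 0 := by
      intro j k; rw [h]
      apply Finset.sum_eq_zero; intro t _; rw [hc t]; ring
    have hthis := hind (fun a => if a = Fin.last p then 1 else 0) ?_ (Fin.last p)
    · simp at hthis
    · intro j k
      have : (∑ a, (if a = Fin.last p then (1:F) else 0) * T (Sum.inr a) j k)
          = T (Sum.inr (Fin.last p)) j k := by simp [ite_mul]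
      rw [this, hzero]
  obtain ⟨t₀, ht₀⟩ := hex
  refine ⟨t₀.pos, ?_⟩
  obtain ⟨s, rfl⟩ : ∃ s, r = s + 1 := ⟨r - 1, by have := t₀.pos; omega⟩
  refine ⟨fun u => - x t₀ (Sum.map id Fin.castSucc u) / x t₀ (Sum.inr (Fin.last p)), ?_⟩
  simp only [Nat.add_sub_cancel]
  apply hasDec_drop F _ s
    (fun t u => x t (Sum.map id Fin.castSucc u) +
      (- x t₀ (Sum.map id Fin.castSucc u) / x t₀ (Sum.inr (Fin.last p)))
        * x t (Sum.inr (Fin.last p)))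
    y z ?_ t₀ ?_
  · intro u j k
    rw [h, h, Finset.mul_sum, ← Finset.sum_add_distrib]
    exact Finset.sum_congr rfl fun t _ => by ring
  · intro u
    rw [div_mul_cancel₀ _ ht₀]
    ring

end Step

section Elim

variable (F : Type) [Field F]

lemma elim_cols {I K : Type} [Fintype I] [Fintype K] (S : I → I → K → F) (q : ℕ) :
    ∀ (T : I → (I ⊕ Fin q) → (Fin 2 × K) → F) (r : ℕ),
      (∀ i j e, T i (Sum.inl j) (0, e) = S i j e) →
      (∀ i b e, T i (Sum.inr b) (0, e) = 0) →
      (∀ c : Fin q → F, (∀ i e, ∑ b, c b * T i (Sum.inr b) (1, e) = 0) → ∀ b, c b = 0) →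
      hasDec F T r → q ≤ r ∧ hasDec F S (r - q) := by
  induction q with
  | zero =>
    intro T r h1 _ _ hdec
    refine ⟨Nat.zero_le _, ?_⟩
    rw [Nat.sub_zero]
    exact hasDec_congr F (fun i j e => h1 i j e)
      (hasDec_comp F id Sum.inl (fun e => ((0:Fin 2), e)) hdec)
  | succ q ih =>
    intro T r h1 h3b h5 hdec
    have hdecT : hasDec F (fun (v : I ⊕ Fin (q+1)) (u : I) (k : Fin 2 × K) => T u v k) r :=
      hasDec_swap F hdec
    have hind : ∀ c : Fin (q+1) → F,
        (∀ u k, ∑ b, c b * T u (Sum.inr b) k = 0) → ∀ b, c b = 0 := by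
      intro c hc
      apply h5 c
      intro i e
      exact hc i (1, e)
    obtain ⟨hr, μ, hdec'⟩ := step_row F (p := q) (r := r) _ hdecT
      (fun c hc => hind c (fun u k => hc u k))
    have hdec'' : hasDec F (fun (u : I) (v : I ⊕ Fin q) (k : Fin 2 × K) =>
        T u (Sum.map id Fin.castSucc v) k + μ v * T u (Sum.inr (Fin.last q)) k) (r - 1) :=
      hasDec_swap F hdec'
    have h1' : ∀ i j e, T i (Sum.map id Fin.castSucc (Sum.inl j)) ((0:Fin 2), e)
        + μ (Sum.inl j) * T i (Sum.inr (Fin.last q)) (0, e) = S i j e := by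
      intro i j e
      simp only [Sum.map_inl, id_eq]
      rw [h1, h3b]; ring
    have h3b' : ∀ i (b : Fin q) e, T i (Sum.map id Fin.castSucc (Sum.inr b)) ((0:Fin 2), e)
        + μ (Sum.inr b) * T i (Sum.inr (Fin.last q)) (0, e) = 0 := by
      intro i b e
      simp only [Sum.map_inr]
      rw [h3b, h3b]; ring
    have h5' : ∀ c : Fin q → F,
        (∀ i e, ∑ b, c b * (T i (Sum.map id Fin.castSucc (Sum.inr b)) ((1:Fin 2), e)
          + μ (Sum.inr b) * T i (Sum.inr (Fin.last q)) (1, e)) = 0) → ∀ b, c b = 0 := by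
      intro c hc b
      have key : ∀ b' : Fin (q+1),
          (Fin.lastCases (∑ b, c b * μ (Sum.inr b)) c b' : F) = 0 := by
        apply h5
        intro i e
        rw [Fin.sum_univ_castSucc]
        simp only [Fin.lastCases_castSucc, Fin.lastCases_last]
        have hc' := hc i e
        simp only [Sum.map_inr] at hc'
        rw [Finset.sum_mul, ← hc', ← Finset.sum_add_distrib]
        exact Finset.sum_congr rfl fun b _ => by ring
      have hb := key b.castSucc
      rwa [Fin.lastCases_castSucc] at hb
    obtain ⟨hq, hS⟩ := ih _ (r - 1) h1' h3b' h5' hdec''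
    refine ⟨by omega, ?_⟩
    have heq : r - 1 - q = r - (q + 1) := by omega
    rwa [heq] at hS

lemma elim_rows (p : ℕ) :
    ∀ (q : ℕ) {I K : Type} [Fintype I] [Fintype K] (S : I → I → K → F)
      (T : (I ⊕ Fin p) → (I ⊕ Fin q) → (Fin 2 × K) → F) (r : ℕ),
      (∀ i j e, T (Sum.inl i) (Sum.inl j) (0, e) = S i j e) →
      (∀ a b k, T (Sum.inr a) (Sum.inr b) k = 0) →
      (∀ a j e, T (Sum.inr a) (Sum.inl j) (0, e) = 0) →
      (∀ i b e, T (Sum.inl i) (Sum.inr b) (0, e) = 0) →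
      (∀ c : Fin p → F, (∀ j e, ∑ a, c a * T (Sum.inr a) (Sum.inl j) (1, e) = 0) →
        ∀ a, c a = 0) →
      (∀ c : Fin q → F, (∀ i e, ∑ b, c b * T (Sum.inl i) (Sum.inr b) (1, e) = 0) →
        ∀ b, c b = 0) →
      hasDec F T r → p + q ≤ r ∧ hasDec F S (r - (p + q)) := by
  induction p with
  | zero =>
    intro q I K _ _ S T r h1 h2 h3a h3b h4 h5 hdec
    have hdec0 : hasDec F (fun (i : I) (v : I ⊕ Fin q) (k : Fin 2 × K) =>
        T (Sum.inl i) v k) r := hasDec_comp F Sum.inl id id hdec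
    obtain ⟨hq, hS⟩ := elim_cols F S q _ r h1 h3b h5 hdec0
    exact ⟨by omega, by rwa [Nat.zero_add]⟩
  | succ p ih =>
    intro q I K _ _ S T r h1 h2 h3a h3b h4 h5 hdec
    have hind : ∀ c : Fin (p+1) → F,
        (∀ (v : I ⊕ Fin q) k, ∑ a, c a * T (Sum.inr a) v k = 0) → ∀ a, c a = 0 := by
      intro c hc
      apply h4 c
      intro j e
      exact hc (Sum.inl j) (1, e)
    obtain ⟨hr, μ, hdec'⟩ := step_row F (p := p) (r := r) _ hdec
      (fun c hc => hind c (fun v k => hc v k))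
    set T' : (I ⊕ Fin p) → (I ⊕ Fin q) → (Fin 2 × K) → F :=
      fun u v k => T (Sum.map id Fin.castSucc u) v k
        + μ u * T (Sum.inr (Fin.last p)) v k with hT'
    have h1' : ∀ i j e, T' (Sum.inl i) (Sum.inl j) (0, e) = S i j e := by
      intro i j e
      simp only [hT', Sum.map_inl, id_eq]
      rw [h1, h3a]; ring
    have h2' : ∀ a b k, T' (Sum.inr a) (Sum.inr b) k = 0 := by
      intro a b k
      simp only [hT', Sum.map_inr]
      rw [h2, h2]; ring
    have h3a' : ∀ a j e, T' (Sum.inr a) (Sum.inl j) (0, e) = 0 := by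
      intro a j e
      simp only [hT', Sum.map_inr]
      rw [h3a, h3a]; ring
    have h3b' : ∀ i b e, T' (Sum.inl i) (Sum.inr b) (0, e) = 0 := by
      intro i b e
      simp only [hT', Sum.map_inl, id_eq]
      rw [h3b, h2]; ring
    have h4' : ∀ c : Fin p → F,
        (∀ j e, ∑ a, c a * T' (Sum.inr a) (Sum.inl j) (1, e) = 0) → ∀ a, c a = 0 := by
      intro c hc a
      have key : ∀ a' : Fin (p+1),
          (Fin.lastCases (∑ a, c a * μ (Sum.inr a)) c a' : F) = 0 := by
        apply h4
        intro j e
        rw [Fin.sum_univ_castSucc]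
        simp only [Fin.lastCases_castSucc, Fin.lastCases_last]
        have hc' := hc j e
        simp only [hT', Sum.map_inr] at hc'
        rw [Finset.sum_mul, ← hc', ← Finset.sum_add_distrib]
        exact Finset.sum_congr rfl fun a _ => by ring
      have ha := key a.castSucc
      rwa [Fin.lastCases_castSucc] at ha
    have h5' : ∀ c : Fin q → F,
        (∀ i e, ∑ b, c b * T' (Sum.inl i) (Sum.inr b) (1, e) = 0) → ∀ b, c b = 0 := by
      intro c hc b
      apply h5 c ?_ b
      intro i e
      have hc' := hc i e
      simp only [hT', Sum.map_inl, id_eq] at hc'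
      rw [← hc']
      exact Finset.sum_congr rfl fun b' _ => by rw [h2]; ring
    obtain ⟨hpq, hS⟩ := ih q S T' (r - 1) h1' h2' h3a' h3b' h4' h5' hdec'
    refine ⟨by omega, ?_⟩
    have heq : r - 1 - (p + q) = r - (p + 1 + q) := by omega
    rwa [heq] at hS

end Elim

section ArecProps

variable (F : Type) [Field F] (m : ℕ)

lemma Arec_symm : ∀ (i : ℕ) (r c : ArecIdx m i) (e : ArecSl i),
    Arec F m i r c e = Arec F m i c r e := by
  intro i
  induction i with
  | zero =>
    intro r c e
    simp only [Arec]
    by_cases h : r = c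
    · simp [h]
    · rw [if_neg h, if_neg (fun hc => h hc.symm)]
  | succ i ih =>
    intro r c e
    obtain ⟨er, r⟩ := r
    obtain ⟨ec, c⟩ := c
    obtain ⟨de, e⟩ := e
    simp only [Arec]
    split_ifs <;> first | exact ih r c e | rfl | tauto

lemma Arec_rowsIndep : ∀ (i : ℕ) (lam : ArecIdx m i → F),
    (∀ j, ∑ x, lam x * (∑ e, Arec F m i x j e) = 0) → ∀ x, lam x = 0 := by
  intro i
  induction i with
  | zero =>
    intro lam h x
    have hx := h x
    replace hx : ∑ y : Fin m, lam y *
        (∑ e : Fin 1, Arec F m 0 y x e) = 0 := hx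
    simp [Arec, ite_mul] at hx
    rw [← hx]
    exact (Fintype.sum_ite_eq' (ι := Fin m) x lam).symm
  | succ i ih =>
    intro lam h
    have inner1 : ∀ (ε : Fin 2) (x : ArecIdx m i) (y : ArecIdx m i),
        (∑ e : ArecSl (i+1), Arec F m (i+1) (ε, x) ((1:Fin 2), y) e)
          = if ε = 0 then ∑ e, Arec F m i x y e else 0 := by
      intro ε x y
      show (∑ e : Fin 2 × ArecSl i, Arec F m (i+1) (ε, x) ((1:Fin 2), y) e) = _
      erw [Fintype.sum_prod_type, Fin.sum_univ_two]
      fin_cases ε <;> simp [Arec]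
    have inner0 : ∀ (ε : Fin 2) (x : ArecIdx m i) (y : ArecIdx m i),
        (∑ e : ArecSl (i+1), Arec F m (i+1) (ε, x) ((0:Fin 2), y) e)
          = ∑ e, Arec F m i x y e := by
      intro ε x y
      show (∑ e : Fin 2 × ArecSl i, Arec F m (i+1) (ε, x) ((0:Fin 2), y) e) = _
      erw [Fintype.sum_prod_type, Fin.sum_univ_two]
      fin_cases ε <;> simp [Arec]
    have h0 : ∀ x, lam (0, x) = 0 := by
      apply ih (fun x => lam ((0:Fin 2), x))
      intro j
      have hj := h ((1:Fin 2), j)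
      replace hj : ∑ x : Fin 2 × ArecIdx m i, lam x *
          (∑ e : ArecSl (i+1), Arec F m (i+1) x ((1:Fin 2), j) e) = 0 := hj
      rw [Fintype.sum_prod_type, Fin.sum_univ_two] at hj
      simp only [inner1] at hj
      simpa using hj
    have h1 : ∀ x, lam (1, x) = 0 := by
      apply ih (fun x => lam ((1:Fin 2), x))
      intro j
      have hj := h ((0:Fin 2), j)
      replace hj : ∑ x : Fin 2 × ArecIdx m i, lam x *
          (∑ e : ArecSl (i+1), Arec F m (i+1) x ((0:Fin 2), j) e) = 0 := hj
      rw [Fintype.sum_prod_type, Fin.sum_univ_two] at hj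
      simp only [inner0] at hj
      simp only [h0, zero_mul, Finset.sum_const_zero, zero_add] at hj
      exact hj
    intro x
    obtain ⟨ε, x⟩ := x
    fin_cases ε
    · exact h0 x
    · exact h1 x

lemma card_ArecIdx : ∀ i : ℕ, Fintype.card (ArecIdx m i) = m * 2 ^ i := by
  intro i
  induction i with
  | zero =>
    show Fintype.card (Fin m) = m * 2 ^ 0
    simp
  | succ i ih =>
    show Fintype.card (Fin 2 × ArecIdx m i) = m * 2 ^ (i + 1)
    rw [Fintype.card_prod, Fintype.card_fin, ih, pow_succ]
    ring

end ArecProps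

section MainBound

variable (F : Type) [Field F]

lemma card_ArecSl : ∀ i : ℕ, Fintype.card (ArecSl i) = 2 ^ i := by
  intro i
  induction i with
  | zero =>
    show Fintype.card (Fin 1) = 2 ^ 0
    simp
  | succ i ih =>
    show Fintype.card (Fin 2 × ArecSl i) = 2 ^ (i + 1)
    rw [Fintype.card_prod, Fintype.card_fin, ih, pow_succ]
    ring

lemma Arec_rank_lb (m : ℕ) : ∀ (i : ℕ) (r : ℕ),
    hasDec F (Arec F m i) r → m * (2 ^ (i + 1) - 1) ≤ r := by
  intro i
  induction i with
  | zero =>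
    intro r hdec
    obtain ⟨x, y, z, h⟩ := hdec
    have key : (1 : Matrix (Fin m) (Fin m) F) =
        (Matrix.of fun (i : Fin m) (t : Fin r) => x t i * z t ((0 : Fin 1))) *
        (Matrix.of fun (t : Fin r) (j : Fin m) => y t j) := by
      ext i j
      rw [Matrix.mul_apply]
      calc (1 : Matrix (Fin m) (Fin m) F) i j = (if i = j then (1:F) else 0) :=
            Matrix.one_apply
        _ = Arec F m 0 i j ((0 : Fin 1)) := by simp only [Arec]; rfl
        _ = ∑ t, x t i * y t j * z t ((0 : Fin 1)) := h i j ((0 : Fin 1))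
        _ = ∑ t, (Matrix.of fun (i : Fin m) (t : Fin r) => x t i * z t ((0 : Fin 1))) i t *
              (Matrix.of fun (t : Fin r) (j : Fin m) => y t j) t j := by
            refine Finset.sum_congr rfl fun t _ => ?_
            simp only [Matrix.of_apply]
            ring
    have hle : ((1 : Matrix (Fin m) (Fin m) F)).rank ≤ r := by
      rw [key]
      refine le_trans (Matrix.rank_mul_le_left _ _) ?_
      refine le_trans (Matrix.rank_le_card_width _) ?_
      simp
    rw [Matrix.rank_one, Fintype.card_fin] at hle
    simpa using hle
  | succ i ih =>
    intro r hdec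
    set N := Fintype.card (ArecIdx m i) with hN
    set σ := (Fintype.equivFin (ArecIdx m i)).symm with hσ
    set ρ : (ArecIdx m i ⊕ Fin N) → ArecIdx m (i+1) :=
      Sum.elim (fun x => ((0:Fin 2), x)) (fun a => ((1:Fin 2), σ a)) with hρ
    have hdecT : hasDec F
        (fun (u v : ArecIdx m i ⊕ Fin N) (k : Fin 2 × ArecSl i) =>
          Arec F m (i+1) (ρ u) (ρ v) k) r :=
      hasDec_comp F ρ ρ id hdec
    have hone : ((1:Fin 2) = 0) = False := by simp [Fin.ext_iff]
    have h1 : ∀ x y e, Arec F m (i+1) (ρ (Sum.inl x)) (ρ (Sum.inl y)) ((0:Fin 2), e)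
        = Arec F m i x y e := by
      intro x y e
      show Arec F m (i+1) ((0:Fin 2), x) ((0:Fin 2), y) ((0:Fin 2), e) = _
      simp [Arec]
    have h2 : ∀ a b (k : Fin 2 × ArecSl i),
        Arec F m (i+1) (ρ (Sum.inr a)) (ρ (Sum.inr b)) k = 0 := by
      intro a b k
      obtain ⟨δ, e⟩ := k
      show Arec F m (i+1) ((1:Fin 2), σ a) ((1:Fin 2), σ b) (δ, e) = 0
      simp only [Arec]
      split_ifs with hh1 hh2 hh3 <;> first | rfl | (exfalso; simp [hone] at *)
    have h3a : ∀ a y e, Arec F m (i+1) (ρ (Sum.inr a)) (ρ (Sum.inl y)) ((0:Fin 2), e) = 0 := by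
      intro a y e
      show Arec F m (i+1) ((1:Fin 2), σ a) ((0:Fin 2), y) ((0:Fin 2), e) = 0
      simp only [Arec]
      simp [hone]
    have h3b : ∀ x b e, Arec F m (i+1) (ρ (Sum.inl x)) (ρ (Sum.inr b)) ((0:Fin 2), e) = 0 := by
      intro x b e
      show Arec F m (i+1) ((0:Fin 2), x) ((1:Fin 2), σ b) ((0:Fin 2), e) = 0
      simp only [Arec]
      simp [hone]
    have h4eval : ∀ a y e, Arec F m (i+1) (ρ (Sum.inr a)) (ρ (Sum.inl y)) ((1:Fin 2), e)
        = Arec F m i (σ a) y e := by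
      intro a y e
      show Arec F m (i+1) ((1:Fin 2), σ a) ((0:Fin 2), y) ((1:Fin 2), e) = _
      simp only [Arec]
      simp [hone]
    have h5eval : ∀ x b e, Arec F m (i+1) (ρ (Sum.inl x)) (ρ (Sum.inr b)) ((1:Fin 2), e)
        = Arec F m i (σ b) x e := by
      intro x b e
      show Arec F m (i+1) ((0:Fin 2), x) ((1:Fin 2), σ b) ((1:Fin 2), e) = _
      simp only [Arec]
      simp [hone]
      exact Arec_symm F m i x (σ b) e
    have key : ∀ c : Fin N → F,
        (∀ y e, ∑ a, c a * Arec F m i (σ a) y e = 0) → ∀ a, c a = 0 := by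
      intro c hc a
      have hl : ∀ x, c (σ.symm x) = 0 := by
        apply Arec_rowsIndep F m i (fun x => c (σ.symm x))
        intro j
        have swap : ∀ x : ArecIdx m i, c (σ.symm x) * (∑ e, Arec F m i x j e)
            = ∑ e, c (σ.symm x) * Arec F m i x j e := by
          intro x; rw [Finset.mul_sum]
        calc ∑ x, c (σ.symm x) * (∑ e, Arec F m i x j e)
            = ∑ x, ∑ e, c (σ.symm x) * Arec F m i x j e :=
              Finset.sum_congr rfl fun x _ => swap x
          _ = ∑ e, ∑ x, c (σ.symm x) * Arec F m i x j e := Finset.sum_comm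
          _ = ∑ e, ∑ a, c a * Arec F m i (σ a) j e := by
              refine Finset.sum_congr rfl fun e _ => ?_
              rw [← Equiv.sum_comp σ (fun x => c (σ.symm x) * Arec F m i x j e)]
              refine Finset.sum_congr rfl fun a _ => by rw [Equiv.symm_apply_apply]
          _ = 0 := by
              refine Finset.sum_eq_zero fun e _ => hc j e
      have := hl (σ a)
      rwa [Equiv.symm_apply_apply] at this
    have h4 : ∀ c : Fin N → F,
        (∀ y e, ∑ a, c a * Arec F m (i+1) (ρ (Sum.inr a)) (ρ (Sum.inl y)) ((1:Fin 2), e) = 0) →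
        ∀ a, c a = 0 := by
      intro c hc
      apply key c
      intro y e
      have := hc y e
      simp only [h4eval] at this
      exact this
    have h5 : ∀ c : Fin N → F,
        (∀ x e, ∑ b, c b * Arec F m (i+1) (ρ (Sum.inl x)) (ρ (Sum.inr b)) ((1:Fin 2), e) = 0) →
        ∀ b, c b = 0 := by
      intro c hc
      apply key c
      intro y e
      have := hc y e
      simp only [h5eval] at this
      exact this
    obtain ⟨hle, hS⟩ := elim_rows F N N (Arec F m i) _ r h1 h2 h3a h3b h4 h5 hdecT
    have hIH := ih _ hS
    obtain ⟨t', ht'⟩ : ∃ t', 2 ^ i = t' + 1 :=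
      ⟨2 ^ i - 1, by have := Nat.one_le_two_pow (n := i); omega⟩
    have e1 : m * (2 ^ (i + 1) - 1) = 2 * (m * t') + m := by
      rw [pow_succ, ht']
      have : (t' + 1) * 2 - 1 = 2 * t' + 1 := by omega
      rw [this]; ring
    have e2 : m * (2 ^ (i + 1 + 1) - 1) = 4 * (m * t') + 3 * m := by
      rw [pow_succ, pow_succ, ht']
      have : (t' + 1) * 2 * 2 - 1 = 4 * t' + 3 := by omega
      rw [this]; ring
    have e3 : N = m * t' + m := by
      rw [hN, card_ArecIdx, ht']; ring
    rw [e1, e3] at hIH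
    rw [e3] at hle
    rw [e2]
    generalize m * t' = P at hIH hle ⊢
    omega

end MainBound

theorem arec_final_rank (F : Type) [Field F] (n k l : ℕ) (hk : 1 ≤ k) (hn : n = 2 ^ l) :
    Fintype.card (ArecIdx (n ^ (k - 1)) l) = n ^ k ∧
    Fintype.card (ArecSl l) = n ∧
    2 * n ^ k - n ^ (k - 1) ≤ tRank F (Arec F (n ^ (k - 1)) l) := by
  have hk' : n ^ k = n ^ (k - 1) * n := by
    rw [← pow_succ]
    congr 1
    omega
  refine ⟨?_, ?_, ?_⟩
  · rw [card_ArecIdx, ← hn, ← hk']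
  · rw [card_ArecSl, ← hn]
  · have hlb : n ^ (k - 1) * (2 ^ (l + 1) - 1) ≤ tRank F (Arec F (n ^ (k - 1)) l) := by
      rw [tRank_eq_sInf]
      refine le_csInf ⟨_, hasDec_total F _⟩ ?_
      intro b hb
      exact Arec_rank_lb F (n ^ (k - 1)) l b hb
    obtain ⟨t', ht'⟩ : ∃ t', 2 ^ l = t' + 1 :=
      ⟨2 ^ l - 1, by have := Nat.one_le_two_pow (n := l); omega⟩
    have e1 : n ^ (k - 1) * (2 ^ (l + 1) - 1) = 2 * (n ^ (k - 1) * t') + n ^ (k - 1) := by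
      rw [pow_succ, ht']
      have : (t' + 1) * 2 - 1 = 2 * t' + 1 := by omega
      rw [this]; ring
    have e2 : 2 * n ^ k = 2 * (n ^ (k - 1) * t') + 2 * n ^ (k - 1) := by
      rw [hk', hn, ht']; ring
    rw [e1] at hlb
    rw [e2]
    generalize n ^ (k - 1) * t' = P at hlb ⊢
    generalize n ^ (k - 1) = M at hlb ⊢
    omega
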